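/- The standard skew-normal density is log-concave: for f(x) = 2·φ(x)·Φ(αx), the second derivative of log f(x) with respect to x is negative for all x ∈ ℝ and all α ∈ ℝ. -/

import Mathlib

open MeasureTheory Real Filter Set

noncomputable def phi (x : ℝ) : ℝ := (Real.sqrt (2 * Real.pi))⁻¹ * Real.exp (-x ^ 2 / 2)

noncomputable def Phi (x : ℝ) : ℝ := ∫ t in Set.Iic x, phi t

lemma phi_pos (x : ℝ) : 0 < phi x := by
  unfold phi
  positivity

lemma continuous_phi : Continuous phi := by
  unfold phi
  continuity

lemma phi_eq (x : ℝ) : phi x = (Real.sqrt (2 * Real.pi))⁻¹ * Real.exp (-(1/2) * x ^ 2) := by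
  unfold phi; ring_nf

lemma integrable_phi : Integrable phi := by
  have : Integrable (fun x : ℝ => (Real.sqrt (2 * Real.pi))⁻¹ * Real.exp (-(1/2) * x ^ 2)) :=
    (integrable_exp_neg_mul_sq (by norm_num)).const_mul _
  exact this.congr (by filter_upwards with x; rw [phi_eq])

lemma integrable_id_mul_phi : Integrable (fun t : ℝ => t * phi t) := by
  have : Integrable (fun x : ℝ => (Real.sqrt (2 * Real.pi))⁻¹ * (x * Real.exp (-(1/2) * x ^ 2))) :=
    ((integrable_mul_exp_neg_mul_sq (by norm_num)).const_mul _)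
  exact this.congr (by filter_upwards with x; rw [phi_eq]; ring)

lemma Phi_pos (x : ℝ) : 0 < Phi x := by
  unfold Phi
  rw [setIntegral_pos_iff_support_of_nonneg_ae]
  · have : Function.support phi = Set.univ := by
      ext t; simp [Function.mem_support, (phi_pos t).ne']
    rw [this, Set.univ_inter, Real.volume_Iic]
    simp
  · filter_upwards with t using (phi_pos t).le
  · exact integrable_phi.integrableOn

lemma hasDerivAt_phi (x : ℝ) : HasDerivAt phi (-x * phi x) x := by
  have h1 : HasDerivAt (fun y : ℝ => -y ^ 2 / 2) (-x) x := by
    have := ((hasDerivAt_pow 2 x).neg).div_const 2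
    exact this.congr_deriv (by simp; ring)
  have h2 := (h1.exp).const_mul (Real.sqrt (2 * Real.pi))⁻¹
  exact h2.congr_deriv (by unfold phi; ring)

lemma hasDerivAt_Phi (x : ℝ) : HasDerivAt Phi (phi x) x := by
  have hint : Phi = fun y => Phi 0 + ∫ t in (0:ℝ)..y, phi t := by
    funext y
    rw [← intervalIntegral.integral_Iic_sub_Iic integrable_phi.integrableOn
      integrable_phi.integrableOn]
    unfold Phi; ring
  rw [hint]
  exact (intervalIntegral.integral_hasDerivAt_right
    (continuous_phi.intervalIntegrable _ _)
    (continuous_phi.stronglyMeasurableAtFilter _ _)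
    continuous_phi.continuousAt).const_add _

lemma tendsto_phi_atBot : Tendsto phi atBot (nhds 0) := by
  have h1 : Tendsto (fun t : ℝ => t ^ 2) atBot atTop := by
    have := tendsto_id.atBot_mul_atBot₀ (tendsto_id (x := atBot (α := ℝ)))
    exact this.congr fun t => by simp [sq]
  have h2 : Tendsto (fun t : ℝ => -t ^ 2 / 2) atBot atBot :=
    (tendsto_neg_atTop_atBot.comp h1).atBot_div_const (by norm_num)
  have h3 : Tendsto (fun t : ℝ => Real.exp (-t ^ 2 / 2)) atBot (nhds 0) :=
    Real.tendsto_exp_atBot.comp h2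
  have := h3.const_mul (Real.sqrt (2 * Real.pi))⁻¹
  simp only [mul_zero] at this
  exact this

lemma integral_id_mul_phi (u : ℝ) : ∫ t in Set.Iic u, t * phi t = -phi u := by
  have := integral_Iic_of_hasDerivAt_of_tendsto'
    (f := fun t => -phi t) (f' := fun t => t * phi t) (a := u)
    (fun t _ => (hasDerivAt_phi t).neg.congr_deriv (by ring))
    integrable_id_mul_phi.integrableOn
    (by simpa using tendsto_phi_atBot.neg)
  simpa using this

lemma mills (u : ℝ) : 0 ≤ u * Phi u + phi u := by
  rcases le_or_gt 0 u with hu | hu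
  · have := Phi_pos u
    have := phi_pos u
    nlinarith
  · have hle : Phi u ≤ ∫ t in Set.Iic u, (t / u) * phi t := by
      unfold Phi
      apply setIntegral_mono_on integrable_phi.integrableOn
        ((integrable_id_mul_phi.div_const u).congr
          (by filter_upwards with t; ring)).integrableOn
        measurableSet_Iic
      intro t ht
      simp only [Set.mem_Iic] at ht
      have h1 : (1 : ℝ) ≤ t / u := by
        rw [le_div_iff_of_neg hu]
        linarith
      nlinarith [phi_pos t]
    have heq : ∫ t in Set.Iic u, (t / u) * phi t = -phi u / u := by
      have : ∀ t : ℝ, (t / u) * phi t = u⁻¹ * (t * phi t) := fun t => by ring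
      simp_rw [this, integral_const_mul, integral_id_mul_phi]
      ring
    rw [heq] at hle
    have := mul_le_mul_of_nonpos_left hle hu.le
    rw [mul_div_cancel₀ _ hu.ne] at this
    linarith

lemma hasDerivAt_Phi_comp (α y : ℝ) :
    HasDerivAt (fun y : ℝ => Phi (α * y)) (phi (α * y) * α) y := by
  have := (hasDerivAt_Phi (α * y)).comp y ((hasDerivAt_id y).const_mul α)
  simpa [Function.comp_def] using this

lemma hasDerivAt_phi_comp (α y : ℝ) :
    HasDerivAt (fun y : ℝ => phi (α * y)) (-(α * y) * phi (α * y) * α) y := by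
  have := (hasDerivAt_phi (α * y)).comp y ((hasDerivAt_id y).const_mul α)
  simpa [mul_assoc, Function.comp_def] using this

lemma hasDerivAt_logf (α y : ℝ) :
    HasDerivAt (fun y : ℝ => Real.log (2 * phi y * Phi (α * y)))
      (-y + α * (phi (α * y) / Phi (α * y))) y := by
  have hf : HasDerivAt (fun y : ℝ => 2 * phi y * Phi (α * y))
      (2 * (-y * phi y) * Phi (α * y) + 2 * phi y * (phi (α * y) * α)) y :=
    ((hasDerivAt_phi y).const_mul 2).mul (hasDerivAt_Phi_comp α y)
  have hne : 2 * phi y * Phi (α * y) ≠ 0 := by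
    have := phi_pos y; have := Phi_pos (α * y); positivity
  have := hf.log hne
  convert this using 1
  have h1 := (phi_pos y).ne'
  have h2 := (Phi_pos (α * y)).ne'
  have h3 := (Phi_pos (y * α)).ne'
  field_simp

lemma logf_deriv (α : ℝ) : deriv (fun y : ℝ => Real.log (2 * phi y * Phi (α * y))) =
    fun y : ℝ => -y + α * (phi (α * y) / Phi (α * y)) := by
  funext y
  exact (hasDerivAt_logf α y).deriv

theorem skew_normal_log_concave (α x : ℝ) :
    deriv (deriv (fun y : ℝ => Real.log (2 * phi y * Phi (α * y)))) x < 0 := by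
  rw [logf_deriv]
  have hdiv := (hasDerivAt_phi_comp α x).div (hasDerivAt_Phi_comp α x) (Phi_pos (α * x)).ne'
  have hG : HasDerivAt (fun y : ℝ => -y + α * (phi (α * y) / Phi (α * y)))
      (-1 + α * ((-(α * x) * phi (α * x) * α * Phi (α * x)
        - phi (α * x) * (phi (α * x) * α)) / Phi (α * x) ^ 2)) x := by
    have := (hasDerivAt_id x).neg.add (hdiv.const_mul α)
    simpa [Pi.add_def] using this
  rw [hG.deriv]
  have hkey : α * ((-(α * x) * phi (α * x) * α * Phi (α * x)
      - phi (α * x) * (phi (α * x) * α)) / Phi (α * x) ^ 2)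
      = -(α ^ 2 * phi (α * x) * (α * x * Phi (α * x) + phi (α * x))) / Phi (α * x) ^ 2 := by
    ring
  have hle : -(α ^ 2 * phi (α * x) * (α * x * Phi (α * x) + phi (α * x))) / Phi (α * x) ^ 2 ≤ 0 :=
    div_nonpos_of_nonpos_of_nonneg
      (neg_nonpos.2 (mul_nonneg (mul_nonneg (sq_nonneg α) (phi_pos _).le) (mills _)))
      (sq_nonneg _)
  rw [hkey]
  linarith
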